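/- Let n ≥ 2 and X = ([0,1] × {0}) ∪ {(1/2, 1/m) : 1 ≤ m < n}, topologized with Euclidean neighborhoods on [0,1] × {0} and neighborhood base U_k((1/2,1/m)) = {(1/2,1/m)} ∪ (((1/2 − 1/k, 1/2 + 1/k) \ {1/2}) × {0}) at each point (1/2, 1/m). Then X is (n+1)-Hausdorff but not n-Hausdorff. -/

import Mathlib

open Set

/-- `X` is `τ`-Hausdorff: every subset `A` with `|A| ≥ τ` admits open neighborhoods
of its points with empty intersection. -/
def NHausdorff (X : Type*) [TopologicalSpace X] (τ : Cardinal) : Prop :=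
  ∀ A : Set X, τ ≤ Cardinal.mk A →
    ∃ U : X → Set X, (∀ a ∈ A, IsOpen (U a) ∧ a ∈ U a) ∧ (⋂ a ∈ A, U a) = ∅

/-- `X = ([0,1] × {0}) ∪ {(1/2, 1/m) : 1 ≤ m < n}`. -/
def S2 (n : ℕ) : Set (ℝ × ℝ) :=
  (Set.Icc (0 : ℝ) 1 ×ˢ {(0 : ℝ)}) ∪
    {p | ∃ m : ℕ, 1 ≤ m ∧ m < n ∧ p = ((1/2 : ℝ), 1/(m : ℝ))}

/-- The basic neighborhood `U_k((1/2, 1/m))`. -/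
def U2 (n m k : ℕ) : Set (S2 n) :=
  {p : S2 n | (p : ℝ × ℝ) = (1/2, 1/(m : ℝ)) ∨
    ((p : ℝ × ℝ).2 = 0 ∧ (p : ℝ × ℝ).1 ∈ Set.Ioo (1/2 - 1/(k : ℝ)) (1/2 + 1/(k : ℝ)) ∧
      (p : ℝ × ℝ).1 ≠ 1/2)}

/-- Traces on the line `[0,1] × {0}` of Euclidean open sets. -/
def lineOpens2 (n : ℕ) : Set (Set (S2 n)) :=
  {V | ∃ W : Set ℝ, IsOpen W ∧ V = {p : S2 n | (p : ℝ × ℝ).2 = 0 ∧ (p : ℝ × ℝ).1 ∈ W}}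

/-- The topology on `S2 n`: Euclidean neighborhoods on the line, and the `U_k((1/2,1/m))`
as neighborhood bases at the special points. -/
def T2ex (n : ℕ) : TopologicalSpace (S2 n) :=
  TopologicalSpace.generateFrom
    (lineOpens2 n ∪ {V | ∃ m k : ℕ, 1 ≤ m ∧ m < n ∧ 1 ≤ k ∧ V = U2 n m k})

-- monotonicity
lemma U2_mono (n m : ℕ) {k k' : ℕ} (hk : 1 ≤ k) (hkk : k ≤ k') : U2 n m k' ⊆ U2 n m k := by
  intro p hp
  rcases hp with h | ⟨h0, ⟨h1, h2⟩, h3⟩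
  · exact Or.inl h
  · refine Or.inr ⟨h0, ⟨?_, ?_⟩, h3⟩
    · have : (1:ℝ)/k' ≤ 1/k := by
        apply one_div_le_one_div_of_le
        · exact_mod_cast hk
        · exact_mod_cast hkk
      linarith
    · have : (1:ℝ)/k' ≤ 1/k := by
        apply one_div_le_one_div_of_le
        · exact_mod_cast hk
        · exact_mod_cast hkk
      linarith

lemma lemA (n m : ℕ) (hm1 : 1 ≤ m) {O : Set (S2 n)}
    (hO : TopologicalSpace.GenerateOpen
      (lineOpens2 n ∪ {V | ∃ m k : ℕ, 1 ≤ m ∧ m < n ∧ 1 ≤ k ∧ V = U2 n m k}) O)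
    {x : S2 n} (hx : (x : ℝ × ℝ) = (1/2, 1/(m : ℝ))) (hxO : x ∈ O) :
    ∃ k, 1 ≤ k ∧ U2 n m k ⊆ O := by
  have hm0 : (0:ℝ) < 1/(m:ℝ) := by
    apply one_div_pos.2; exact_mod_cast Nat.lt_of_lt_of_le Nat.zero_lt_one hm1
  induction hO with
  | basic V hV =>
    rcases hV with ⟨W, hW, rfl⟩ | ⟨m', k', hm', hm'n, hk', rfl⟩
    · exfalso
      have := hxO.1
      rw [hx] at this
      simp at this
      linarith
    · rcases hxO with h | ⟨h0, _, _⟩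
      · rw [hx] at h
        have h2 : (1:ℝ)/m = 1/m' := by
          have := congrArg Prod.snd h; simpa using this
        have : m = m' := by
          have hm'0 : (0:ℝ) < (m':ℝ) := by exact_mod_cast hm'
          have hm0' : (0:ℝ) < (m:ℝ) := by exact_mod_cast hm1
          field_simp at h2
          exact_mod_cast h2.symm
        subst this
        exact ⟨k', hk', subset_rfl⟩
      · exfalso; rw [hx] at h0; simp at h0; linarith
  | univ => exact ⟨1, le_refl 1, subset_univ _⟩
  | inter V₁ V₂ _ _ ih1 ih2 =>
    obtain ⟨k1, hk1, hs1⟩ := ih1 hxO.1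
    obtain ⟨k2, hk2, hs2⟩ := ih2 hxO.2
    refine ⟨max k1 k2, le_trans hk1 (le_max_left _ _), ?_⟩
    intro p hp
    exact ⟨hs1 (U2_mono n m hk1 (le_max_left _ _) hp),
      hs2 (U2_mono n m hk2 (le_max_right _ _) hp)⟩
  | sUnion S _ ih =>
    obtain ⟨V, hVS, hxV⟩ := hxO
    obtain ⟨k, hk, hs⟩ := ih V hVS hxV
    exact ⟨k, hk, hs.trans (subset_sUnion_of_mem hVS)⟩

lemma lemB (n : ℕ) {O : Set (S2 n)}
    (hO : TopologicalSpace.GenerateOpen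
      (lineOpens2 n ∪ {V | ∃ m k : ℕ, 1 ≤ m ∧ m < n ∧ 1 ≤ k ∧ V = U2 n m k}) O)
    {x : S2 n} (hx2 : (x : ℝ × ℝ).2 = 0) (hxO : x ∈ O) :
    ∃ ε > (0:ℝ), ∀ p : S2 n, (p : ℝ × ℝ).2 = 0 →
      |(p : ℝ × ℝ).1 - (x : ℝ × ℝ).1| < ε → p ∈ O := by
  induction hO with
  | basic V hV =>
    rcases hV with ⟨W, hW, rfl⟩ | ⟨m', k', hm', hm'n, hk', rfl⟩
    · obtain ⟨ε, hε, hball⟩ := Metric.isOpen_iff.1 hW _ hxO.2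
      refine ⟨ε, hε, fun p hp2 hp1 => ⟨hp2, hball ?_⟩⟩
      rwa [Metric.mem_ball, Real.dist_eq]
    · rcases hxO with h | ⟨h0, ⟨h1, h2⟩, h3⟩
      · exfalso
        have := congrArg Prod.snd h
        simp [hx2] at this
        have hm'0 : (0:ℝ) < (m':ℝ) := by exact_mod_cast hm'
        linarith
      · set t := (x : ℝ × ℝ).1
        refine ⟨min (min (t - (1/2 - 1/(k':ℝ))) ((1/2 + 1/(k':ℝ)) - t)) |t - 1/2|,
          ?_, fun p hp2 hp1 => ?_⟩
        · apply lt_min (lt_min (by linarith) (by linarith))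
          exact abs_pos.2 (sub_ne_zero.2 h3)
        · have e1 : |(p : ℝ × ℝ).1 - t| < t - (1/2 - 1/(k':ℝ)) :=
            lt_of_lt_of_le hp1 ((min_le_left _ _).trans (min_le_left _ _))
          have e2 : |(p : ℝ × ℝ).1 - t| < (1/2 + 1/(k':ℝ)) - t :=
            lt_of_lt_of_le hp1 ((min_le_left _ _).trans (min_le_right _ _))
          have e3 : |(p : ℝ × ℝ).1 - t| < |t - 1/2| :=
            lt_of_lt_of_le hp1 (min_le_right _ _)
          have a1 := abs_lt.1 e1
          have a2 := abs_lt.1 e2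
          refine Or.inr ⟨hp2, ⟨by linarith [a1.1], by linarith [a2.2]⟩, ?_⟩
          intro hc
          rw [hc] at e3
          have := abs_sub_comm (1/2 : ℝ) t
          rw [this] at e3
          exact lt_irrefl _ e3
  | univ => exact ⟨1, one_pos, fun p _ _ => mem_univ p⟩
  | inter V₁ V₂ _ _ ih1 ih2 =>
    obtain ⟨ε1, hε1, hs1⟩ := ih1 hxO.1
    obtain ⟨ε2, hε2, hs2⟩ := ih2 hxO.2
    exact ⟨min ε1 ε2, lt_min hε1 hε2, fun p hp2 hp1 =>
      ⟨hs1 p hp2 (lt_of_lt_of_le hp1 (min_le_left _ _)),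
       hs2 p hp2 (lt_of_lt_of_le hp1 (min_le_right _ _))⟩⟩
  | sUnion S _ ih =>
    obtain ⟨V, hVS, hxV⟩ := hxO
    obtain ⟨ε, hε, hs⟩ := ih V hVS hxV
    exact ⟨ε, hε, fun p hp2 hp1 => ⟨V, hVS, hs p hp2 hp1⟩⟩

lemma pt0_mem (n : ℕ) : ((1/2 : ℝ), (0:ℝ)) ∈ S2 n :=
  Or.inl ⟨⟨by norm_num, by norm_num⟩, rfl⟩

lemma ptm_mem (n m : ℕ) (h1 : 1 ≤ m) (h2 : m < n) : ((1/2 : ℝ), 1/(m:ℝ)) ∈ S2 n :=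
  Or.inr ⟨m, h1, h2, rfl⟩

lemma line_mem (n : ℕ) {s : ℝ} (h0 : 0 ≤ s) (h1 : s ≤ 1) : ((s, (0:ℝ)) : ℝ × ℝ) ∈ S2 n :=
  Or.inl ⟨⟨h0, h1⟩, rfl⟩

-- positive direction
lemma pos_dir (n : ℕ) (hn : 2 ≤ n) : @NHausdorff (S2 n) (T2ex n) (n + 1) := by
  classical
  intro A hA
  -- find two distinct line points in A
  have key : ∃ p ∈ A, ∃ q ∈ A, p ≠ q ∧ ((p : ℝ × ℝ)).2 = 0 ∧ ((q : ℝ × ℝ)).2 = 0 := by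
    by_contra hc
    push_neg at hc
    set F : Finset (ℝ × ℝ) :=
      (Finset.Ico 1 n).image (fun m : ℕ => ((1/2 : ℝ), 1/(m:ℝ))) with hF
    have hspec : ∀ p : S2 n, (p : ℝ × ℝ).2 ≠ 0 → (p : ℝ × ℝ) ∈ (F : Set (ℝ × ℝ)) := by
      intro p hp
      rcases p.2 with h | ⟨m, h1, h2, h3⟩
      · exact absurd h.2 hp
      · rw [hF]
        simp only [Finset.coe_image, Finset.coe_Ico]
        exact ⟨m, ⟨h1, h2⟩, h3.symm⟩
    have hcard : Cardinal.mk A ≤ (n : Cardinal) := by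
      by_cases hex : ∃ p ∈ A, (p : ℝ × ℝ).2 = 0
      · obtain ⟨p0, hp0A, hp02⟩ := hex
        have hsub : Subtype.val '' A ⊆ ((insert (p0 : ℝ × ℝ) F : Finset (ℝ × ℝ)) : Set (ℝ × ℝ)) := by
          rintro v ⟨p, hpA, rfl⟩
          by_cases h2 : (p : ℝ × ℝ).2 = 0
          · have : p = p0 := by
              by_contra hne
              exact hc p hpA p0 hp0A hne h2 hp02
            subst this
            exact Finset.mem_coe.2 (Finset.mem_insert_self _ _)
          · simp only [Finset.coe_insert, Set.mem_insert_iff]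
            exact Or.inr (hspec p h2)
        calc Cardinal.mk A = Cardinal.mk (Subtype.val '' A) :=
              (Cardinal.mk_image_eq Subtype.val_injective).symm
          _ ≤ Cardinal.mk ((insert (p0 : ℝ × ℝ) F : Finset (ℝ × ℝ)) : Set (ℝ × ℝ)) :=
              Cardinal.mk_le_mk_of_subset hsub
          _ = ((insert (p0 : ℝ × ℝ) F).card : Cardinal) := Cardinal.mk_coe_finset
          _ ≤ (n : Cardinal) := by
              have : (insert (p0 : ℝ × ℝ) F).card ≤ n := by
                calc (insert (p0 : ℝ × ℝ) F).card ≤ F.card + 1 := Finset.card_insert_le _ _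
                  _ ≤ (Finset.Ico 1 n).card + 1 := by
                      have h := Finset.card_image_le (s := Finset.Ico 1 n)
                        (f := fun m : ℕ => ((1/2 : ℝ), 1/(m:ℝ)))
                      rw [hF]
                      omega
                  _ = (n - 1) + 1 := by rw [Nat.card_Ico]
                  _ ≤ n := by omega
              exact_mod_cast this
      · push_neg at hex
        have hsub : Subtype.val '' A ⊆ (F : Set (ℝ × ℝ)) := by
          rintro v ⟨p, hpA, rfl⟩
          exact hspec p (hex p hpA)
        calc Cardinal.mk A = Cardinal.mk (Subtype.val '' A) :=
              (Cardinal.mk_image_eq Subtype.val_injective).symm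
          _ ≤ Cardinal.mk (F : Set (ℝ × ℝ)) := Cardinal.mk_le_mk_of_subset hsub
          _ = (F.card : Cardinal) := Cardinal.mk_coe_finset
          _ ≤ (n : Cardinal) := by
              have : F.card ≤ n := by
                calc F.card ≤ (Finset.Ico 1 n).card := by
                      rw [hF]; exact Finset.card_image_le
                  _ ≤ n := by rw [Nat.card_Ico]; omega
              exact_mod_cast this
    have hlt : (n : Cardinal) < (n : Cardinal) + 1 := by
      rw [← Nat.cast_one, ← Nat.cast_add]
      exact_mod_cast Nat.lt_succ_self n
    exact absurd (le_trans hA hcard) (not_le.2 hlt)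
  obtain ⟨p, hpA, q, hqA, hpq, hp2, hq2⟩ := key
  have hx : (p : ℝ × ℝ).1 ≠ (q : ℝ × ℝ).1 := by
    intro h
    apply hpq
    apply Subtype.ext
    apply Prod.ext h (hp2.trans hq2.symm)
  obtain ⟨W1, W2, hW1, hW2, hpW1, hqW2, hdisj⟩ := t2_separation hx
  refine ⟨fun a => if a = p then {r : S2 n | (r : ℝ × ℝ).2 = 0 ∧ (r : ℝ × ℝ).1 ∈ W1}
    else if a = q then {r : S2 n | (r : ℝ × ℝ).2 = 0 ∧ (r : ℝ × ℝ).1 ∈ W2}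
    else Set.univ, ?_, ?_⟩
  · intro a haA
    by_cases h1 : a = p
    · subst h1
      simp only [if_pos rfl]
      exact ⟨TopologicalSpace.isOpen_generateFrom_of_mem (Or.inl ⟨W1, hW1, rfl⟩),
        ⟨hp2, hpW1⟩⟩
    · by_cases h2 : a = q
      · subst h2
        simp only [if_neg h1, if_pos rfl]
        exact ⟨TopologicalSpace.isOpen_generateFrom_of_mem (Or.inl ⟨W2, hW2, rfl⟩),
          ⟨hq2, hqW2⟩⟩
      · simp only [if_neg h1, if_neg h2]
        exact ⟨@isOpen_univ _ (T2ex n), mem_univ a⟩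
  · ext r
    simp only [Set.mem_iInter, Set.mem_empty_iff_false, iff_false]
    intro hr
    have h1 := hr p hpA
    have h2 := hr q hqA
    simp only [if_pos rfl] at h1
    rw [if_neg (Ne.symm hpq), if_pos rfl] at h2
    exact Set.disjoint_left.1 hdisj h1.2 h2.2

noncomputable def fA (n : ℕ) (hn : 2 ≤ n) : Fin n → S2 n := fun i =>
  if h : (i : ℕ) = 0 then ⟨((1/2 : ℝ), (0:ℝ)), pt0_mem n⟩
  else ⟨((1/2 : ℝ), 1/((i : ℕ) : ℝ)), ptm_mem n i (Nat.one_le_iff_ne_zero.2 h) i.2⟩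

lemma fA_val_pos (n : ℕ) (hn : 2 ≤ n) (i : Fin n) (hi : (i : ℕ) = 0) :
    ((fA n hn i : ℝ × ℝ)) = (1/2, 0) := by
  simp only [fA, dif_pos hi]

lemma fA_val_neg (n : ℕ) (hn : 2 ≤ n) (i : Fin n) (hi : (i : ℕ) ≠ 0) :
    ((fA n hn i : ℝ × ℝ)) = (1/2, 1/((i : ℕ) : ℝ)) := by
  simp only [fA, dif_neg hi]

lemma fA_inj (n : ℕ) (hn : 2 ≤ n) : Function.Injective (fA n hn) := by
  intro i j hij
  have hval : ((fA n hn i : ℝ × ℝ)).2 = ((fA n hn j : ℝ × ℝ)).2 := by rw [hij]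
  by_cases hi : (i : ℕ) = 0 <;> by_cases hj : (j : ℕ) = 0
  · exact Fin.ext (hi.trans hj.symm)
  · exfalso
    rw [fA_val_pos n hn i hi, fA_val_neg n hn j hj] at hval
    simp only at hval
    have hj0 : (0:ℝ) < ((j : ℕ) : ℝ) := by exact_mod_cast Nat.pos_of_ne_zero hj
    have := one_div_pos.2 hj0
    linarith [hval]
  · exfalso
    rw [fA_val_neg n hn i hi, fA_val_pos n hn j hj] at hval
    simp only at hval
    have hi0 : (0:ℝ) < ((i : ℕ) : ℝ) := by exact_mod_cast Nat.pos_of_ne_zero hi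
    have := one_div_pos.2 hi0
    linarith [hval]
  · rw [fA_val_neg n hn i hi, fA_val_neg n hn j hj] at hval
    simp only at hval
    have hi0 : (0:ℝ) < ((i : ℕ) : ℝ) := by exact_mod_cast Nat.pos_of_ne_zero hi
    have hj0 : (0:ℝ) < ((j : ℕ) : ℝ) := by exact_mod_cast Nat.pos_of_ne_zero hj
    field_simp at hval
    exact Fin.ext (by exact_mod_cast hval.symm)

lemma neg_dir (n : ℕ) (hn : 2 ≤ n) : ¬ @NHausdorff (S2 n) (T2ex n) n := by
  intro hN
  set A : Set (S2 n) := Set.range (fA n hn) with hAdef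
  have hcard : (n : Cardinal) ≤ Cardinal.mk A := by
    rw [hAdef, Cardinal.mk_range_eq _ (fA_inj n hn), Cardinal.mk_fin]
  obtain ⟨U, hU, hinter⟩ := hN A hcard
  -- eventual membership along 𝓝[>] (1/2)
  have key : ∀ a ∈ A, ∀ᶠ s in nhdsWithin (1/2 : ℝ) (Set.Ioi (1/2 : ℝ)),
      ∀ hp : ((s, (0:ℝ)) : ℝ × ℝ) ∈ S2 n, (⟨(s, 0), hp⟩ : S2 n) ∈ U a := by
    rintro a ⟨i, rfl⟩
    obtain ⟨hopen, hmem⟩ := hU _ ⟨i, rfl⟩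
    by_cases hi : (i : ℕ) = 0
    · -- line point
      have hx2 : ((fA n hn i : ℝ × ℝ)).2 = 0 := by rw [fA_val_pos n hn i hi]
      obtain ⟨ε, hε, hball⟩ := lemB n hopen hx2 hmem
      have hx1 : ((fA n hn i : ℝ × ℝ)).1 = 1/2 := by rw [fA_val_pos n hn i hi]
      have hIoo : Set.Ioo (1/2 : ℝ) (1/2 + ε) ∈ nhdsWithin (1/2 : ℝ) (Set.Ioi (1/2 : ℝ)) :=
        Ioo_mem_nhdsGT_of_mem ⟨le_refl _, by linarith⟩
      filter_upwards [hIoo] with s hs hp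
      apply hball _ rfl
      rw [hx1]
      rw [abs_of_pos (by simp; linarith [hs.1])]
      simp
      linarith [hs.2]
    · -- special point
      have hm1 : 1 ≤ (i : ℕ) := Nat.one_le_iff_ne_zero.2 hi
      have hx : ((fA n hn i : ℝ × ℝ)) = (1/2, 1/((i : ℕ) : ℝ)) :=
        fA_val_neg n hn i hi
      obtain ⟨k, hk, hsub⟩ := lemA n (i : ℕ) hm1 hopen hx hmem
      have hk0 : (0:ℝ) < 1/(k:ℝ) := by
        apply one_div_pos.2; exact_mod_cast hk
      have hIoo : Set.Ioo (1/2 : ℝ) (1/2 + 1/(k:ℝ)) ∈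
          nhdsWithin (1/2 : ℝ) (Set.Ioi (1/2 : ℝ)) :=
        Ioo_mem_nhdsGT_of_mem ⟨le_refl _, by linarith⟩
      filter_upwards [hIoo] with s hs hp
      apply hsub
      refine Or.inr ⟨rfl, ⟨by linarith [hs.1], hs.2⟩, by simp; linarith [hs.1]⟩
  have hfin : A.Finite := Set.finite_range _
  have hall := (Filter.eventually_all_finite hfin).2 key
  have hIoo1 : Set.Ioo (1/2 : ℝ) 1 ∈ nhdsWithin (1/2 : ℝ) (Set.Ioi (1/2 : ℝ)) :=
    Ioo_mem_nhdsGT_of_mem ⟨le_refl _, by norm_num⟩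
  obtain ⟨s, hs1, hs2⟩ := (hall.and (Filter.eventually_of_mem hIoo1 (fun _ h => h))).exists
  have hp : ((s, (0:ℝ)) : ℝ × ℝ) ∈ S2 n := line_mem n (by linarith [hs2.1]) (le_of_lt hs2.2)
  have : (⟨(s, 0), hp⟩ : S2 n) ∈ ⋂ a ∈ A, U a :=
    Set.mem_iInter₂.2 fun a ha => hs1 a ha hp
  rw [hinter] at this
  exact this

theorem stmt_15 (n : ℕ) (hn : 2 ≤ n) :
    @NHausdorff (S2 n) (T2ex n) (n + 1) ∧ ¬ @NHausdorff (S2 n) (T2ex n) n :=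
  ⟨pos_dir n hn, neg_dir n hn⟩
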